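/- The function g(t) = −π^{3/2}/(2√2 (1 + cosh(πt))) has Fourier transform ĝ(ν) = (2π)^{-1/2} ∫_{-∞}^{∞} g(t) e^{-iνt} dt = −ν/(2 sinh ν) for all real ν ≠ 0 (with value −1/2 at ν = 0 by continuity). -/

import Mathlib

open Real Complex MeasureTheory

/-- The filter function `g(t) = −π^{3/2}/(2√2 (1 + cosh(πt)))`. -/
noncomputable def gFilter (t : ℝ) : ℝ :=
  -(π ^ ((3 : ℝ) / 2)) / (2 * Real.sqrt 2 * (1 + Real.cosh (π * t)))

open Set
lemma beta_Ioi {s : ℂ} (hs : s.re = 1) :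
    ∫ u in Ioi (0:ℝ), (u:ℂ)^(s-1) / ((1:ℂ)+u)^2
      = Complex.Gamma s * Complex.Gamma (2-s) := by
  have hs1 : 0 < s.re := by rw [hs]; norm_num
  have hs2 : 0 < (2-s).re := by simp [Complex.sub_re, hs]
  rw [Complex.Gamma_mul_Gamma_eq_betaIntegral hs1 hs2]
  have h2 : Complex.Gamma (s + (2-s)) = 1 := by
    rw [show s + (2-s) = 1 + 1 by ring, Complex.Gamma_add_one 1 one_ne_zero,
      Complex.Gamma_one, mul_one]
  rw [h2, one_mul, Complex.betaIntegral]
  -- change of variables u ↦ u/(1+u)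
  have hderiv : ∀ u ∈ Ioi (0:ℝ), HasDerivWithinAt (fun u : ℝ => u / (1+u))
      ((1+u)^2)⁻¹ (Ioi 0) u := by
    intro u hu
    have hu' : (0:ℝ) < u := hu
    have h1 : (0:ℝ) < 1 + u := by linarith
    have := (hasDerivAt_id u).div (by simpa using (hasDerivAt_id u).const_add 1) h1.ne'
    refine HasDerivWithinAt.congr_deriv this.hasDerivWithinAt ?_
    simp only [id]; ring
  have hinj : InjOn (fun u : ℝ => u / (1+u)) (Ioi 0) := by
    intro a ha b hb h
    have ha' : (0:ℝ) < a := ha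
    have hb' : (0:ℝ) < b := hb
    have h1 : (0:ℝ) < 1 + a := by linarith
    have h2 : (0:ℝ) < 1 + b := by linarith
    field_simp at h
    linarith
  have himg : (fun u : ℝ => u / (1+u)) '' (Ioi 0) = Ioo 0 1 := by
    ext x
    constructor
    · rintro ⟨u, hu, rfl⟩
      have hu' : (0:ℝ) < u := hu
      have h1 : (0:ℝ) < 1 + u := by linarith
      constructor
      · positivity
      · rw [div_lt_one h1]; linarith
    · rintro ⟨hx0, hx1⟩
      have h1 : (0:ℝ) < 1 - x := by linarith
      refine ⟨x / (1 - x), Set.mem_Ioi.mpr (div_pos hx0 h1), ?_⟩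
      field_simp; ring
  have key := integral_image_eq_integral_abs_deriv_smul measurableSet_Ioi hderiv hinj
      (fun x : ℝ => (x : ℂ) ^ (s - 1) * (1 - (x : ℂ)) ^ ((2-s) - 1))
  rw [himg] at key
  rw [intervalIntegral.integral_of_le (by norm_num : (0:ℝ) ≤ 1),
    MeasureTheory.integral_Ioc_eq_integral_Ioo, key]
  refine (setIntegral_congr_fun measurableSet_Ioi fun u hu => ?_).symm
  have hu' : (0:ℝ) < u := hu
  have h1 : (0:ℝ) < 1 + u := by linarith
  have hC : ((1+u:ℝ):ℂ) ≠ 0 := by exact_mod_cast h1.ne'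
  have harg : ((1+u : ℝ) : ℂ).arg ≠ π := by
    rw [Complex.arg_ofReal_of_nonneg h1.le]
    exact Real.pi_ne_zero.symm
  have e1 : (1:ℂ) - ((u/(1+u) : ℝ) : ℂ) = (((1+u)⁻¹ : ℝ) : ℂ) := by
    rw [show ((1+u)⁻¹ : ℝ) = 1 - u/(1+u) by field_simp; ring]
    push_cast; ring
  have e2 : ((u/(1+u) : ℝ) : ℂ) ^ (s-1)
      = (u:ℂ)^(s-1) * ((((1+u)⁻¹ : ℝ)):ℂ)^(s-1) := by
    rw [show (u/(1+u) : ℝ) = u * ((1+u)⁻¹ : ℝ) by ring, Complex.ofReal_mul,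
      mul_cpow_ofReal_nonneg hu'.le (by positivity)]
  have e3 : ((((1+u)⁻¹ : ℝ)):ℂ)^(s-1) = (((1+u:ℝ):ℂ)^(s-1))⁻¹ := by
    rw [Complex.ofReal_inv, Complex.inv_cpow _ _ harg]
  have e4 : ((((1+u)⁻¹ : ℝ)):ℂ)^(1-s) = ((1+u:ℝ):ℂ)^(s-1) := by
    rw [Complex.ofReal_inv, Complex.inv_cpow _ _ harg, ← Complex.cpow_neg, neg_sub]
  have hne : ((1+u:ℝ):ℂ)^(s-1) ≠ 0 := by
    intro h
    rw [Complex.cpow_eq_zero_iff] at h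
    exact hC h.1
  have habs : |((1+u)^2)⁻¹| = ((1+u)^2)⁻¹ := abs_of_pos (by positivity)
  have e5 : ((1:ℂ)+u)^2 = ((1+u:ℝ):ℂ)^2 := by push_cast; ring
  rw [show ((2:ℂ)-s)-1 = 1-s by ring, habs, e1, e2, e3, e4, Complex.real_smul, e5,
    mul_assoc ((u:ℂ)^(s-1)), inv_mul_cancel₀ hne, mul_one, Complex.ofReal_inv,
    Complex.ofReal_pow, mul_comm, div_eq_mul_inv]

lemma expSubst (ν : ℝ) :
    ∫ u in Ioi (0:ℝ), (u:ℂ)^(((ν/π : ℝ) : ℂ) * I) / ((1:ℂ)+u)^2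
      = ((π/2 : ℝ) : ℂ) * ∫ t : ℝ, ((1/(1+Real.cosh (π*t)) : ℝ) : ℂ) * Complex.exp (-(I*ν*t)) := by
  have hπ : (0:ℝ) < π := Real.pi_pos
  have hderiv : ∀ t ∈ (univ : Set ℝ), HasDerivWithinAt (fun t : ℝ => rexp (-(π*t)))
      (rexp (-(π*t)) * -π) univ t := by
    intro t _
    have := ((Real.hasDerivAt_exp (-(π*t))).comp t (((hasDerivAt_id t).const_mul π).neg)).hasDerivWithinAt (s := univ)
    simpa [Function.comp_def, Pi.neg_def] using this
  have hinj : InjOn (fun t : ℝ => rexp (-(π*t))) univ := by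
    intro a _ b _ h
    have := Real.exp_injective h
    have : π * a = π * b := by linarith
    exact mul_left_cancel₀ hπ.ne' this
  have himg : (fun t : ℝ => rexp (-(π*t))) '' univ = Ioi 0 := by
    ext x
    simp only [image_univ, mem_range, mem_Ioi]
    constructor
    · rintro ⟨t, rfl⟩; exact Real.exp_pos _
    · intro hx
      exact ⟨-(Real.log x)/π, by rw [show -(π * (-(Real.log x)/π)) = Real.log x by field_simp,
        Real.exp_log hx]⟩
  have key := integral_image_eq_integral_abs_deriv_smul MeasurableSet.univ hderiv hinj
      (fun u : ℝ => (u:ℂ)^(((ν/π : ℝ) : ℂ) * I) / ((1:ℂ)+u)^2)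
  rw [himg, MeasureTheory.setIntegral_univ] at key
  rw [key, ← MeasureTheory.integral_const_mul]
  congr 1
  ext t
  -- pointwise computation
  have hE : (0:ℝ) < rexp (-(π*t)) := Real.exp_pos _
  have habs : |rexp (-(π*t)) * -π| = π * rexp (-(π*t)) := by
    rw [abs_of_nonpos (by nlinarith)]; ring
  have hcpow : ((rexp (-(π*t)) : ℝ) : ℂ) ^ (((ν/π : ℝ) : ℂ) * I)
      = Complex.exp (-(I*ν*t)) := by
    rw [Complex.ofReal_exp, Complex.cpow_def_of_ne_zero (Complex.exp_ne_zero _),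
      Complex.log_exp (by simpa using hπ) (by simp [Real.pi_nonneg])]
    congr 1
    have hπ' : (π:ℂ) ≠ 0 := by exact_mod_cast hπ.ne'
    push_cast
    field_simp
  have hr : (π * rexp (-(π*t))) / (1 + rexp (-(π*t)))^2
      = (π/2) * (1/(1+Real.cosh (π*t))) := by
    have h1 : (0:ℝ) < 1 + rexp (-(π*t)) := by positivity
    have h2 : (0:ℝ) < 1 + Real.cosh (π*t) := by
      have := Real.cosh_pos (π*t); linarith
    rw [Real.cosh_eq, Real.exp_neg]
    have h3 : rexp (π*t) ≠ 0 := (Real.exp_pos _).ne'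
    rw [Real.exp_neg] at h1
    field_simp
    ring
  rw [habs, Complex.real_smul, hcpow]
  rw [show ((1:ℂ) + (rexp (-(π*t)) : ℝ)) ^ 2 = (((1 + rexp (-(π*t)))^2 : ℝ) : ℂ) by push_cast; ring]
  rw [div_eq_mul_inv (Complex.exp _), ← Complex.ofReal_inv, mul_comm (Complex.exp _),
    ← mul_assoc, ← Complex.ofReal_mul, ← div_eq_mul_inv, hr, Complex.ofReal_mul]
  ring

lemma gamma_eval (ν : ℝ) (hν : ν ≠ 0) :
    Complex.Gamma (1 + ((ν/π : ℝ) : ℂ) * I) * Complex.Gamma (2 - (1 + ((ν/π : ℝ) : ℂ) * I))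
      = (ν : ℂ) / Complex.sinh ν := by
  set s : ℂ := 1 + ((ν/π : ℝ) : ℂ) * I with hs
  have hπ : (π:ℂ) ≠ 0 := by exact_mod_cast Real.pi_ne_zero
  have h1s : 1 - s ≠ 0 := by
    intro h
    have him := congrArg Complex.im h
    simp [hs] at him
    exact hν him
  have h2 : (2:ℂ) - s = (1 - s) + 1 := by ring
  rw [h2, Complex.Gamma_add_one _ h1s, mul_comm (1-s), ← mul_assoc,
    Complex.Gamma_mul_Gamma_one_sub s]
  have hsin : Complex.sin (π * s) = -(Complex.sinh ν * I) := by
    have hpiv : (π:ℂ) * ((ν:ℂ)/(π:ℂ)) = ν := by field_simp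
    have : (π:ℂ) * s = π + ν * I := by
      rw [hs]; push_cast; rw [mul_add, mul_one, ← mul_assoc, hpiv]
    rw [this, Complex.sin_add, Complex.sin_mul_I]
    simp [Complex.sin_pi, Complex.cos_pi]
  have hsinh : Complex.sinh (ν:ℂ) ≠ 0 := by
    rw [← Complex.ofReal_sinh]
    exact_mod_cast Real.sinh_ne_zero.mpr hν
  rw [hsin]
  have h1s' : (1:ℂ) - s = -(((ν/π : ℝ) : ℂ) * I) := by rw [hs]; ring
  rw [h1s']
  push_cast
  field_simp

lemma const_eval : (Real.sqrt (2*π))⁻¹ * (-(π^((3:ℝ)/2))/(2*Real.sqrt 2)) * ((π/2 : ℝ))⁻¹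
    = -(1/2) := by
  have h2π : Real.sqrt (2*π) = Real.sqrt 2 * Real.sqrt π := Real.sqrt_mul (by norm_num) π
  have h32 : π^((3:ℝ)/2) = π * Real.sqrt π := by
    rw [Real.sqrt_eq_rpow, show (3:ℝ)/2 = 1 + 1/2 by norm_num, Real.rpow_add Real.pi_pos,
      Real.rpow_one]
  have hsπ : Real.sqrt π * Real.sqrt π = π := Real.mul_self_sqrt Real.pi_nonneg
  have hs2 : Real.sqrt 2 * Real.sqrt 2 = 2 := Real.mul_self_sqrt (by norm_num)
  have hπ : (0:ℝ) < π := Real.pi_pos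
  have hsπ' : (0:ℝ) < Real.sqrt π := Real.sqrt_pos.mpr hπ
  have hs2' : (0:ℝ) < Real.sqrt 2 := Real.sqrt_pos.mpr (by norm_num)
  rw [h2π, h32]
  field_simp
  linear_combination hs2

/-- **Fourier transform of the filter:** with the convention
`ĝ(ν) = (2π)^{-1/2} ∫ g(t) e^{-iνt} dt`, one has `ĝ(ν) = −ν/(2 sinh ν)` for `ν ≠ 0`,
and `ĝ(0) = −1/2` (the limiting value). -/
theorem gFilter_fourierTransform (ν : ℝ) :
    ((Real.sqrt (2 * π) : ℂ))⁻¹ * ∫ t : ℝ, (gFilter t : ℂ) * Complex.exp (-(I * ν * t)) =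
      if ν = 0 then (-1 / 2 : ℂ) else ((-ν / (2 * Real.sinh ν) : ℝ) : ℂ) := by
  set s : ℂ := 1 + ((ν/π : ℝ) : ℂ) * I with hsdef
  have hs : s.re = 1 := by simp [hsdef]
  have h1 := beta_Ioi hs
  have hexp : s - 1 = ((ν/π : ℝ) : ℂ) * I := by rw [hsdef]; ring
  rw [hexp, expSubst ν] at h1
  have hπ2 : ((π/2 : ℝ) : ℂ) ≠ 0 := by
    exact_mod_cast (by positivity : (0:ℝ) < π/2).ne'
  have hbase : (∫ t : ℝ, ((1/(1+Real.cosh (π*t)) : ℝ) : ℂ) * Complex.exp (-(I*ν*t)))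
      = ((π/2 : ℝ) : ℂ)⁻¹ * (Complex.Gamma s * Complex.Gamma (2-s)) := by
    rw [← h1, ← mul_assoc, inv_mul_cancel₀ hπ2, one_mul]
  have hg : (∫ t : ℝ, (gFilter t : ℂ) * Complex.exp (-(I * ν * t)))
      = ((-(π^((3:ℝ)/2))/(2*Real.sqrt 2) : ℝ) : ℂ) *
        ∫ t : ℝ, ((1/(1+Real.cosh (π*t)) : ℝ) : ℂ) * Complex.exp (-(I*ν*t)) := by
    rw [← MeasureTheory.integral_const_mul]
    congr 1
    ext t
    rw [← mul_assoc, ← Complex.ofReal_mul]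
    congr 2
    unfold gFilter
    rw [mul_one_div, div_div]
  rw [hg, hbase, ← mul_assoc, ← mul_assoc,
    show ((Real.sqrt (2 * π) : ℂ))⁻¹ * ((-(π^((3:ℝ)/2))/(2*Real.sqrt 2) : ℝ) : ℂ)
        * ((π/2 : ℝ) : ℂ)⁻¹ = ((-(1/2) : ℝ) : ℂ) from by
      rw [← Complex.ofReal_inv, ← Complex.ofReal_inv, ← Complex.ofReal_mul,
        ← Complex.ofReal_mul, const_eval]]
  by_cases hν : ν = 0
  · subst hν
    rw [if_pos rfl]
    have hs1 : s = 1 := by rw [hsdef]; norm_num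
    rw [hs1, show (2:ℂ) - 1 = 1 by norm_num, Complex.Gamma_one]
    norm_num
  · rw [if_neg hν, gamma_eval ν hν, ← Complex.ofReal_sinh]
    have hsh : ((Real.sinh ν : ℝ) : ℂ) ≠ 0 := by
      exact_mod_cast Real.sinh_ne_zero.mpr hν
    push_cast
    field_simp
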